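/- If N is a closed PCF_dp program and the quasi-quote ⟨M⟩ is contextually congruent to N, then N evaluates to some quasi-quote ⟨M'⟩ with M contextually congruent to M'. -/

import Mathlib

/-!  A formalization of the meta-programming language PCF_dp (Davies–Pfenning style
quasi-quotation over call-by-value PCF), with small-step reduction, typing with a
modal context, contexts, contextual (pre)congruence, models, and a shallow
semantics for the program logic's formulae and judgements. -/

namespace PCFdp

/-- Types of PCF_dp: base types, functions, and code types `⟨α⟩`. -/
inductive Ty : Type
  | unit | bool | int
  | arrow (a b : Ty)
  | code (a : Ty)
deriving DecidableEq

/-- Terms of PCF_dp. `quote M` is the quasi-quote `⟨M⟩`, and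
`letq x M N` is `let ⟨x⟩ = M in N`. `fix g x α β M` is `μg.λx^α.M`. -/
inductive Tm : Type
  | var (x : ℕ)
  | cunit
  | cbool (b : Bool)
  | cint (n : ℤ)
  | lam (x : ℕ) (α : Ty) (M : Tm)
  | fix (g x : ℕ) (α β : Ty) (M : Tm)
  | app (M N : Tm)
  | add (M N : Tm)
  | ifte (M N N' : Tm)
  | quote (M : Tm)
  | letq (x : ℕ) (M N : Tm)
deriving DecidableEq

/-- Values: constants, abstractions, recursive abstractions, and all quasi-quotes. -/
inductive IsValue : Tm → Prop
  | cunit : IsValue .cunit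
  | cbool (b) : IsValue (.cbool b)
  | cint (n) : IsValue (.cint n)
  | lam (x α M) : IsValue (.lam x α M)
  | fix (g x α β M) : IsValue (.fix g x α β M)
  | quote (M) : IsValue (.quote M)

/-- Substitution `M[N/x]` (substituted terms are closed in all uses below). -/
def subst (x : ℕ) (N : Tm) : Tm → Tm
  | .var y => if y = x then N else .var y
  | .cunit => .cunit
  | .cbool b => .cbool b
  | .cint n => .cint n
  | .lam y α M => if y = x then .lam y α M else .lam y α (subst x N M)
  | .fix g y α β M => if g = x ∨ y = x then .fix g y α β M else .fix g y α β (subst x N M)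
  | .app M M' => .app (subst x N M) (subst x N M')
  | .add M M' => .add (subst x N M) (subst x N M')
  | .ifte M M₁ M₂ => .ifte (subst x N M) (subst x N M₁) (subst x N M₂)
  | .quote M => .quote (subst x N M)
  | .letq y M M' => .letq y (subst x N M) (if y = x then M' else subst x N M')

/-- Call-by-value small-step reduction, with the redexes of PCF plus
`let ⟨x⟩ = ⟨M⟩ in N → N[M/x]`, closed under evaluation contexts. -/
inductive Step : Tm → Tm → Prop
  | beta {x α M V} : IsValue V → Step (.app (.lam x α M) V) (subst x V M)
  | betaFix {g x α β M V} : IsValue V →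
      Step (.app (.fix g x α β M) V) (subst x V (subst g (.fix g x α β M) M))
  | iteT {N N'} : Step (.ifte (.cbool true) N N') N
  | iteF {N N'} : Step (.ifte (.cbool false) N N') N'
  | addC {m n} : Step (.add (.cint m) (.cint n)) (.cint (m + n))
  | letqQ {x M N} : Step (.letq x (.quote M) N) (subst x M N)
  | appL {M M' N} : Step M M' → Step (.app M N) (.app M' N)
  | appR {V N N'} : IsValue V → Step N N' → Step (.app V N) (.app V N')
  | addL {M M' N} : Step M M' → Step (.add M N) (.add M' N)
  | addR {V N N'} : IsValue V → Step N N' → Step (.add V N) (.add V N')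
  | ifteC {M M' N N'} : Step M M' → Step (.ifte M N N') (.ifte M' N N')
  | letqL {x M M' N} : Step M M' → Step (.letq x M N) (.letq x M' N)

/-- Many-step reduction `→*`. -/
def Steps : Tm → Tm → Prop := Relation.ReflTransGen Step

/-- `M ⇓ V`: evaluation to a value. -/
def Evals (M V : Tm) : Prop := Steps M V ∧ IsValue V

/-- `M ⇓`: convergence. -/
def Conv (M : Tm) : Prop := ∃ V, Evals M V

/-- `M ⇑`: divergence. -/
def Div (M : Tm) : Prop := ¬ Conv M

/-- Typing environments: partial maps from variables to types. -/
def Env : Type := ℕ → Option Ty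
def Env.empty : Env := fun _ => none
def Env.update (Γ : Env) (x : ℕ) (α : Ty) : Env := fun y => if y = x then some α else Γ y

/-- The typing judgement `Γ; Δ ⊢ M : α` with non-modal context `Γ` and modal
context `Δ`.  Free variables of quasi-quoted code must be modal; unquote binds
a modal variable. -/
inductive Types : Env → Env → Tm → Ty → Prop
  | varN {Γ Δ : Env} {x α} : Γ x = some α → Types Γ Δ (.var x) α
  | varM {Γ Δ : Env} {x α} : Δ x = some α → Types Γ Δ (.var x) α
  | cunit {Γ Δ} : Types Γ Δ .cunit .unit
  | cbool {Γ Δ b} : Types Γ Δ (.cbool b) .bool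
  | cint {Γ Δ n} : Types Γ Δ (.cint n) .int
  | lam {Γ Δ x α β M} : Types (Env.update Γ x α) Δ M β → Types Γ Δ (.lam x α M) (.arrow α β)
  | fix {Γ Δ g x α β M} :
      Types (Env.update (Env.update Γ g (.arrow α β)) x α) Δ M β →
      Types Γ Δ (.fix g x α β M) (.arrow α β)
  | app {Γ Δ M N α β} : Types Γ Δ M (.arrow α β) → Types Γ Δ N α → Types Γ Δ (.app M N) β
  | add {Γ Δ M N} : Types Γ Δ M .int → Types Γ Δ N .int → Types Γ Δ (.add M N) .int
  | ifte {Γ Δ M N N' α} : Types Γ Δ M .bool → Types Γ Δ N α → Types Γ Δ N' α →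
      Types Γ Δ (.ifte M N N') α
  | quote {Γ Δ M α} : Types Env.empty Δ M α → Types Γ Δ (.quote M) (.code α)
  | letq {Γ Δ x M N α β} : Types Γ Δ M (.code α) → Types Γ (Env.update Δ x α) N β →
      Types Γ Δ (.letq x M N) β

/-- `M` is a closed program of type `α`. -/
def Closed (M : Tm) (α : Ty) : Prop := Types Env.empty Env.empty M α

/-- Term contexts (terms with one hole). -/
inductive Ctx : Type
  | hole
  | lamC (x : ℕ) (α : Ty) (C : Ctx)
  | fixC (g x : ℕ) (α β : Ty) (C : Ctx)
  | appL (C : Ctx) (N : Tm)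
  | appR (M : Tm) (C : Ctx)
  | addL (C : Ctx) (N : Tm)
  | addR (M : Tm) (C : Ctx)
  | ifteC (C : Ctx) (N N' : Tm)
  | ifteL (M : Tm) (C : Ctx) (N' : Tm)
  | ifteR (M N : Tm) (C : Ctx)
  | quoteC (C : Ctx)
  | letqL (x : ℕ) (C : Ctx) (N : Tm)
  | letqR (x : ℕ) (M : Tm) (C : Ctx)

/-- Plugging a term into a context. -/
def Ctx.plug : Ctx → Tm → Tm
  | .hole, M => M
  | .lamC x α C, M => .lam x α (C.plug M)
  | .fixC g x α β C, M => .fix g x α β (C.plug M)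
  | .appL C N, M => .app (C.plug M) N
  | .appR L C, M => .app L (C.plug M)
  | .addL C N, M => .add (C.plug M) N
  | .addR L C, M => .add L (C.plug M)
  | .ifteC C N N', M => .ifte (C.plug M) N N'
  | .ifteL L C N', M => .ifte L (C.plug M) N'
  | .ifteR L N C, M => .ifte L N (C.plug M)
  | .quoteC C, M => .quote (C.plug M)
  | .letqL x C N, M => .letq x (C.plug M) N
  | .letqR x L C, M => .letq x L (C.plug M)

/-- Contextual precongruence `M ≲ N`: for every closing context `C` of type
`Unit` (for both terms), convergence of `C[M]` implies convergence of `C[N]`. -/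
def Prec (M N : Tm) : Prop :=
  ∀ C : Ctx, Closed (C.plug M) .unit → Closed (C.plug N) .unit →
    Conv (C.plug M) → Conv (C.plug N)

/-- Contextual congruence `M ≃ N`, i.e. `≲ ∩ ≲⁻¹`. -/
def Cong (M N : Tm) : Prop := Prec M N ∧ Prec N M

/-- Partial substitutions (used as the two components of a model). -/
def Sub : Type := ℕ → Option Tm
def Sub.remove (ρ : Sub) (x : ℕ) : Sub := fun y => if y = x then none else ρ y
def Sub.update (ρ : Sub) (x : ℕ) (M : Tm) : Sub := fun y => if y = x then some M else ρ y

/-- Simultaneous substitution of (closed) terms for free variables. -/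
def msubst (ρ : Sub) : Tm → Tm
  | .var x => (ρ x).getD (.var x)
  | .cunit => .cunit
  | .cbool b => .cbool b
  | .cint n => .cint n
  | .lam x α M => .lam x α (msubst (ρ.remove x) M)
  | .fix g x α β M => .fix g x α β (msubst ((ρ.remove g).remove x) M)
  | .app M N => .app (msubst ρ M) (msubst ρ N)
  | .add M N => .add (msubst ρ M) (msubst ρ N)
  | .ifte M N N' => .ifte (msubst ρ M) (msubst ρ N) (msubst ρ N')
  | .quote M => .quote (msubst ρ M)
  | .letq x M N => .letq x (msubst ρ M) (msubst (ρ.remove x) N)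

/-- A model of type `Γ; Δ`: `ξ` maps the non-modal variables to closed values of
the right types, `σ` maps the modal variables to closed (possibly diverging)
programs of the right types. -/
structure Model (Γ Δ : Env) : Type where
  ξ : Sub
  σ : Sub
  ξ_dom : ∀ x, (Γ x).isSome ↔ (ξ x).isSome
  ξ_typed : ∀ x α V, Γ x = some α → ξ x = some V → IsValue V ∧ Closed V α
  σ_dom : ∀ x, (Δ x).isSome ↔ (σ x).isSome
  σ_typed : ∀ x α M, Δ x = some α → σ x = some M → Closed M α

/-- The combined substitution `ξ ∪ σ` of a model. -/
def Model.sub {Γ Δ : Env} (η : Model Γ Δ) : Sub :=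
  fun x => match η.ξ x with | some V => some V | none => η.σ x

/-- The closure `Mη` of a term by a model. -/
def Model.close {Γ Δ : Env} (η : Model Γ Δ) (M : Tm) : Tm := msubst η.sub M

/-- Denotation of a variable in a model given as a pair of substitutions. -/
def lookup (ξ σ : Sub) (u : ℕ) : Option Tm :=
  match ξ u with | some V => some V | none => σ u

/-- Formulae of the logic, represented semantically by their satisfaction
predicate on models `(ξ, σ)`. -/
def Form : Type := Sub → Sub → Prop

/-- Semantics of the code-evaluation predicate `⟨u⟩↘m.A`: the denotation of `u`
evaluates to a quasi-quote `⟨M⟩`, `M ⇓ V`, and `A` holds with the modal anchor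
`m` bound to `V`. -/
def CodeEval (u m : ℕ) (A : Form) : Form := fun ξ σ =>
  ∃ U M V, lookup ξ σ u = some U ∧ Evals U (.quote M) ∧ Evals M V ∧ A ξ (σ.update m V)

/-- Validity of the total-correctness judgement `{A} M :_u {B}`
(anchor `u` non-modal). -/
def Valid (Γ Δ : Env) (A : Form) (M : Tm) (u : ℕ) (B : Form) : Prop :=
  ∀ η : Model Γ Δ, A η.ξ η.σ →
    ∃ V, Evals (η.close M) V ∧ B (η.ξ.update u V) η.σ

/-- Validity of a total-correctness judgement whose anchor is placed modally. -/
def ValidM (Γ Δ : Env) (A : Form) (M : Tm) (m : ℕ) (B : Form) : Prop :=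
  ∀ η : Model Γ Δ, A η.ξ η.σ →
    ∃ V, Evals (η.close M) V ∧ B η.ξ (η.σ.update m V)


/-! ### Auxiliary development: operational part -/

open Relation

/-- Free variables. -/
def FV : Tm → Finset ℕ
  | .var x => {x}
  | .cunit => ∅
  | .cbool _ => ∅
  | .cint _ => ∅
  | .lam x _ M => FV M \ {x}
  | .fix g x _ _ M => FV M \ {g, x}
  | .app M N => FV M ∪ FV N
  | .add M N => FV M ∪ FV N
  | .ifte M N N' => FV M ∪ FV N ∪ FV N'
  | .quote M => FV M
  | .letq x M N => FV M ∪ (FV N \ {x})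

lemma subst_id {x : ℕ} {W : Tm} : ∀ {A : Tm}, x ∉ FV A → subst x W A = A := by
  intro A
  induction A with
  | var y => intro h; simp [FV] at h; simp [subst, Ne.symm h]
  | cunit => intro _; rfl
  | cbool b => intro _; rfl
  | cint n => intro _; rfl
  | lam y a M ih =>
      intro h; simp [FV] at h
      by_cases hy : y = x
      · simp [subst, hy]
      · have : x ∉ FV M := by tauto
        simp [subst, hy, ih this]
  | fix g y a b M ih =>
      intro h; simp [FV] at h
      by_cases hg : g = x
      · simp [subst, hg]
      · by_cases hy : y = x
        · simp [subst, hy]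
        · have : x ∉ FV M := by
            intro hx
            have := h hx
            tauto
          simp [subst, hg, hy, ih this]
  | app M N ihM ihN =>
      intro h; simp [FV] at h; simp [subst, ihM h.1, ihN h.2]
  | add M N ihM ihN =>
      intro h; simp [FV] at h; simp [subst, ihM h.1, ihN h.2]
  | ifte M N N' ihM ihN ihN' =>
      intro h; simp [FV] at h; simp [subst, ihM h.1, ihN h.2.1, ihN' h.2.2]
  | quote M ih =>
      intro h; simp only [FV] at h; simp [subst, ih h]
  | letq y M N ihM ihN =>
      intro h; simp [FV] at h
      by_cases hy : y = x
      · simp [subst, hy, ihM h.1]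
      · have : x ∉ FV N := by
          intro hx
          have := h.2 hx
          tauto
        simp [subst, hy, ihM h.1, ihN this]

lemma mem_fv_subst {x : ℕ} {W : Tm} :
    ∀ {A : Tm} {z : ℕ}, z ∈ FV (subst x W A) → (z ∈ FV A ∧ z ≠ x) ∨ z ∈ FV W := by
  intro A
  induction A with
  | var y =>
      intro z h
      by_cases hy : y = x
      · subst hy; simp [subst] at h; tauto
      · simp [subst, hy, FV] at h ⊢
        exact Or.inl (by omega)
  | cunit => intro z h; simp [subst, FV] at h
  | cbool b => intro z h; simp [subst, FV] at h
  | cint n => intro z h; simp [subst, FV] at h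
  | lam y a M ih =>
      intro z h
      by_cases hy : y = x
      · simp only [subst, if_pos hy] at h
        subst hy
        simp only [FV, Finset.mem_sdiff, Finset.mem_singleton] at h ⊢
        tauto
      · simp only [subst, if_neg hy, FV, Finset.mem_sdiff, Finset.mem_singleton] at h ⊢
        have := ih h.1
        tauto
  | fix g y a b M ih =>
      intro z h
      by_cases hgy : g = x ∨ y = x
      · simp only [subst, if_pos hgy] at h
        simp only [FV, Finset.mem_sdiff, Finset.mem_insert, Finset.mem_singleton] at h ⊢
        rcases hgy with rfl | rfl <;> tauto
      · simp only [subst, if_neg hgy, FV, Finset.mem_sdiff, Finset.mem_insert,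
          Finset.mem_singleton] at h ⊢
        have := ih h.1
        tauto
  | app M N ihM ihN =>
      intro z h
      simp only [subst, FV, Finset.mem_union] at h ⊢
      rcases h with h | h
      · have := ihM h; tauto
      · have := ihN h; tauto
  | add M N ihM ihN =>
      intro z h
      simp only [subst, FV, Finset.mem_union] at h ⊢
      rcases h with h | h
      · have := ihM h; tauto
      · have := ihN h; tauto
  | ifte M N N' ihM ihN ihN' =>
      intro z h
      simp only [subst, FV, Finset.mem_union] at h ⊢
      rcases h with (h | h) | h
      · have := ihM h; tauto
      · have := ihN h; tauto
      · have := ihN' h; tauto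
  | quote M ih =>
      intro z h
      simp only [subst, FV] at h ⊢
      exact ih h
  | letq y M N ihM ihN =>
      intro z h
      by_cases hy : y = x
      · subst hy
        simp only [subst, if_pos rfl, FV, Finset.mem_union, Finset.mem_sdiff,
          Finset.mem_singleton] at h ⊢
        rcases h with h | h
        · have := ihM h; tauto
        · tauto
      · simp only [subst, if_neg hy, FV, Finset.mem_union, Finset.mem_sdiff,
          Finset.mem_singleton] at h ⊢
        rcases h with h | h
        · have := ihM h; tauto
        · have := ihN h.1; tauto
lemma value_no_step {V B : Tm} (hV : IsValue V) (s : Step V B) : False := by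
  cases hV <;> cases s

lemma step_fv {A B : Tm} (s : Step A B) : ∀ {z}, z ∈ FV B → z ∈ FV A := by
  induction s with
  | @beta x a M V _ =>
      intro z hz
      rcases mem_fv_subst hz with ⟨h1, h2⟩ | h1
      · simp [FV, Finset.mem_union, Finset.mem_sdiff, Finset.mem_singleton]; tauto
      · simp [FV]; tauto
  | @betaFix g y a b M V _ =>
      intro z hz
      rcases mem_fv_subst hz with ⟨h1, h2⟩ | h1
      · rcases mem_fv_subst h1 with ⟨h3, h4⟩ | h3
        · simp [FV, Finset.mem_union, Finset.mem_sdiff, Finset.mem_insert,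
            Finset.mem_singleton] at *
          tauto
        · simp [FV, Finset.mem_union, Finset.mem_sdiff, Finset.mem_insert,
            Finset.mem_singleton] at *
          tauto
      · simp [FV]; tauto
  | iteT => intro z hz; simp [FV]; tauto
  | iteF => intro z hz; simp [FV]; tauto
  | addC => intro z hz; simp [FV] at hz
  | @letqQ y M N =>
      intro z hz
      rcases mem_fv_subst hz with ⟨h1, h2⟩ | h1
      · simp [FV, Finset.mem_union, Finset.mem_sdiff, Finset.mem_singleton]; tauto
      · simp [FV]; tauto
  | appL s ih => intro z hz; simp [FV] at hz ⊢; tauto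
  | appR hV s ih => intro z hz; simp [FV] at hz ⊢; tauto
  | addL s ih => intro z hz; simp [FV] at hz ⊢; tauto
  | addR hV s ih => intro z hz; simp [FV] at hz ⊢; tauto
  | ifteC s ih => intro z hz; simp [FV] at hz ⊢; tauto
  | letqL s ih => intro z hz; simp [FV] at hz ⊢; tauto

lemma step_fv_empty {A B : Tm} (s : Step A B) (h : FV A = ∅) : FV B = ∅ := by
  ext z; simp only [Finset.notMem_empty, iff_false]
  intro hz
  have := step_fv s hz
  simp [h] at this

lemma steps_fv_empty {A B : Tm} (s : Steps A B) (h : FV A = ∅) : FV B = ∅ := by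
  induction s with
  | refl => exact h
  | tail _ s2 ih => exact step_fv_empty s2 ih

lemma step_det {A B : Tm} (s : Step A B) : ∀ {B'}, Step A B' → B = B' := by
  induction s with
  | beta hV =>
      intro B' s'
      cases s' with
      | beta hV' => rfl
      | appL s2 => exact absurd s2 (fun s2 => value_no_step (.lam _ _ _) s2)
      | appR hV' s2 => exact absurd s2 (fun s2 => value_no_step hV s2)
  | betaFix hV =>
      intro B' s'
      cases s' with
      | betaFix hV' => rfl
      | appL s2 => exact absurd s2 (fun s2 => value_no_step (.fix _ _ _ _ _) s2)
      | appR hV' s2 => exact absurd s2 (fun s2 => value_no_step hV s2)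
  | iteT =>
      intro B' s'
      cases s' with
      | iteT => rfl
      | ifteC s2 => exact absurd s2 (fun s2 => value_no_step (.cbool _) s2)
  | iteF =>
      intro B' s'
      cases s' with
      | iteF => rfl
      | ifteC s2 => exact absurd s2 (fun s2 => value_no_step (.cbool _) s2)
  | addC =>
      intro B' s'
      cases s' with
      | addC => rfl
      | addL s2 => exact absurd s2 (fun s2 => value_no_step (.cint _) s2)
      | addR hV' s2 => exact absurd s2 (fun s2 => value_no_step (.cint _) s2)
  | letqQ =>
      intro B' s'
      cases s' with
      | letqQ => rfl
      | letqL s2 => exact absurd s2 (fun s2 => value_no_step (.quote _) s2)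
  | appL s ih =>
      intro B' s'
      cases s' with
      | beta hV' => exact absurd s (fun s => value_no_step (.lam _ _ _) s)
      | betaFix hV' => exact absurd s (fun s => value_no_step (.fix _ _ _ _ _) s)
      | appL s2 => rw [ih s2]
      | appR hV' s2 => exact absurd s (fun s => value_no_step hV' s)
  | appR hV s ih =>
      intro B' s'
      cases s' with
      | beta hV' => exact absurd s (fun s => value_no_step hV' s)
      | betaFix hV' => exact absurd s (fun s => value_no_step hV' s)
      | appL s2 => exact absurd s2 (fun s2 => value_no_step hV s2)
      | appR hV' s2 => rw [ih s2]
  | addL s ih =>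
      intro B' s'
      cases s' with
      | addC => exact absurd s (fun s => value_no_step (.cint _) s)
      | addL s2 => rw [ih s2]
      | addR hV' s2 => exact absurd s (fun s => value_no_step hV' s)
  | addR hV s ih =>
      intro B' s'
      cases s' with
      | addC => exact absurd s (fun s => value_no_step (.cint _) s)
      | addL s2 => exact absurd s2 (fun s2 => value_no_step hV s2)
      | addR hV' s2 => rw [ih s2]
  | ifteC s ih =>
      intro B' s'
      cases s' with
      | iteT => exact absurd s (fun s => value_no_step (.cbool _) s)
      | iteF => exact absurd s (fun s => value_no_step (.cbool _) s)
      | ifteC s2 => rw [ih s2]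
  | letqL s ih =>
      intro B' s'
      cases s' with
      | letqQ => exact absurd s (fun s => value_no_step (.quote _) s)
      | letqL s2 => rw [ih s2]

lemma steps_value_eq {V B : Tm} (hV : IsValue V) (s : Steps V B) : B = V := by
  rcases Relation.ReflTransGen.cases_head s with rfl | ⟨c, s1, _⟩
  · rfl
  · exact absurd s1 (fun s1 => value_no_step hV s1)

/-! Steps congruence helpers -/

lemma steps_appL {M M' N : Tm} (h : Steps M M') : Steps (.app M N) (.app M' N) :=
  Relation.ReflTransGen.lift (fun t => Tm.app t N) (fun _ _ s => Step.appL s) _ _ h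

lemma steps_appR {V N N' : Tm} (hV : IsValue V) (h : Steps N N') :
    Steps (.app V N) (.app V N') :=
  Relation.ReflTransGen.lift (fun t => Tm.app V t) (fun _ _ s => Step.appR hV s) _ _ h

lemma steps_addL {M M' N : Tm} (h : Steps M M') : Steps (.add M N) (.add M' N) :=
  Relation.ReflTransGen.lift (fun t => Tm.add t N) (fun _ _ s => Step.addL s) _ _ h

lemma steps_addR {V N N' : Tm} (hV : IsValue V) (h : Steps N N') :
    Steps (.add V N) (.add V N') :=
  Relation.ReflTransGen.lift (fun t => Tm.add V t) (fun _ _ s => Step.addR hV s) _ _ h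

lemma steps_ifteC {M M' N N' : Tm} (h : Steps M M') :
    Steps (.ifte M N N') (.ifte M' N N') :=
  Relation.ReflTransGen.lift (fun t => Tm.ifte t N N') (fun _ _ s => Step.ifteC s) _ _ h

lemma steps_letqL {x : ℕ} {M M' N : Tm} (h : Steps M M') :
    Steps (.letq x M N) (.letq x M' N) :=
  Relation.ReflTransGen.lift (fun t => Tm.letq x t N) (fun _ _ s => Step.letqL s) _ _ h
/-! ### The simulation relation -/

inductive Rel : Tm → Tm → Prop
  | base {A B} (h1 : FV A = ∅) (h2 : Steps A B) : Rel A B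
  | appId {y : ℕ} {σ : Ty} {Q Q' : Tm} (h : Rel Q Q') :
      Rel (.app (.lam y σ (.var y)) Q) Q'
  | var (x) : Rel (.var x) (.var x)
  | cunit : Rel .cunit .cunit
  | cbool (b) : Rel (.cbool b) (.cbool b)
  | cint (n) : Rel (.cint n) (.cint n)
  | lam (x α) {M M'} (h : Rel M M') : Rel (.lam x α M) (.lam x α M')
  | fix (g x α β) {M M'} (h : Rel M M') : Rel (.fix g x α β M) (.fix g x α β M')
  | app {M M' N N'} (h1 : Rel M M') (h2 : Rel N N') : Rel (.app M N) (.app M' N')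
  | add {M M' N N'} (h1 : Rel M M') (h2 : Rel N N') : Rel (.add M N) (.add M' N')
  | ifte {M M' N N' P P'} (h1 : Rel M M') (h2 : Rel N N') (h3 : Rel P P') :
      Rel (.ifte M N P) (.ifte M' N' P')
  | quote {M M'} (h : Rel M M') : Rel (.quote M) (.quote M')
  | letq (x) {M M' N N'} (h1 : Rel M M') (h2 : Rel N N') :
      Rel (.letq x M N) (.letq x M' N')

lemma Rel.refl : ∀ A : Tm, Rel A A := by
  intro A
  induction A with
  | var x => exact .var x
  | cunit => exact .cunit
  | cbool b => exact .cbool b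
  | cint n => exact .cint n
  | lam x a M ih => exact .lam x a ih
  | fix g x a b M ih => exact .fix g x a b ih
  | app M N ihM ihN => exact .app ihM ihN
  | add M N ihM ihN => exact .add ihM ihN
  | ifte M N N' ihM ihN ihN' => exact .ifte ihM ihN ihN'
  | quote M ih => exact .quote ih
  | letq x M N ihM ihN => exact .letq x ihM ihN

lemma substRel {x : ℕ} {V W : Tm} (hVW : Rel V W) :
    ∀ {A B : Tm}, Rel A B → Rel (subst x V A) (subst x W B) := by
  intro A B r
  induction r with
  | base h1 h2 =>
      rw [subst_id (by simp [h1]), subst_id (by simp [steps_fv_empty h2 h1])]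
      exact .base h1 h2
  | @appId y σ Q Q' h ih =>
      by_cases hy : y = x
      · simpa [subst, hy] using Rel.appId ih
      · simpa [subst, hy] using Rel.appId ih
  | var z =>
      by_cases hz : z = x
      · simpa [subst, hz] using hVW
      · simp [subst, hz]; exact .var z
  | cunit => exact .cunit
  | cbool b => exact .cbool b
  | cint n => exact .cint n
  | lam z a h ih =>
      by_cases hz : z = x
      · simpa [subst, hz] using Rel.lam z a h
      · simpa [subst, hz] using Rel.lam z a ih
  | fix g z a b h ih =>
      by_cases hgz : g = x ∨ z = x
      · simpa [subst, hgz] using Rel.fix g z a b h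
      · simpa [subst, hgz] using Rel.fix g z a b ih
  | app h1 h2 ih1 ih2 => exact .app ih1 ih2
  | add h1 h2 ih1 ih2 => exact .add ih1 ih2
  | ifte h1 h2 h3 ih1 ih2 ih3 => exact .ifte ih1 ih2 ih3
  | quote h ih => exact .quote ih
  | letq z h1 h2 ih1 ih2 =>
      by_cases hz : z = x
      · simpa [subst, hz] using Rel.letq z ih1 h2
      · simpa [subst, hz] using Rel.letq z ih1 ih2

lemma val_fwd : ∀ {A B : Tm}, Rel A B → IsValue A → IsValue B := by
  intro A B r hA
  cases r with
  | base h1 h2 => rw [steps_value_eq hA h2]; exact hA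
  | appId h => cases hA
  | var x => cases hA
  | cunit => exact .cunit
  | cbool b => exact .cbool b
  | cint n => exact .cint n
  | lam x a h => exact .lam _ _ _
  | fix g x a b h => exact .fix _ _ _ _ _
  | app h1 h2 => cases hA
  | add h1 h2 => cases hA
  | ifte h1 h2 h3 => cases hA
  | quote h => exact .quote _
  | letq x h1 h2 => cases hA

/-! shape inversion, forward -/

lemma rel_fwd_lam {x : ℕ} {a : Ty} {M B : Tm} (r : Rel (.lam x a M) B) :
    ∃ M', B = .lam x a M' ∧ Rel M M' := by
  cases r with
  | base h1 h2 => exact ⟨M, (steps_value_eq (.lam _ _ _) h2), Rel.refl M⟩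
  | lam _ _ h => exact ⟨_, rfl, h⟩

lemma rel_fwd_fix {g x : ℕ} {a b : Ty} {M B : Tm} (r : Rel (.fix g x a b M) B) :
    ∃ M', B = .fix g x a b M' ∧ Rel M M' := by
  cases r with
  | base h1 h2 => exact ⟨M, (steps_value_eq (.fix _ _ _ _ _) h2), Rel.refl M⟩
  | fix _ _ _ _ h => exact ⟨_, rfl, h⟩

lemma rel_fwd_quote {M B : Tm} (r : Rel (.quote M) B) :
    ∃ M', B = .quote M' ∧ Rel M M' := by
  cases r with
  | base h1 h2 => exact ⟨M, (steps_value_eq (.quote _) h2), Rel.refl M⟩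
  | quote h => exact ⟨_, rfl, h⟩

lemma rel_fwd_cbool {b : Bool} {B : Tm} (r : Rel (.cbool b) B) : B = .cbool b := by
  cases r with
  | base h1 h2 => exact steps_value_eq (.cbool _) h2
  | cbool => rfl

lemma rel_fwd_cint {n : ℤ} {B : Tm} (r : Rel (.cint n) B) : B = .cint n := by
  cases r with
  | base h1 h2 => exact steps_value_eq (.cint _) h2
  | cint => rfl
/-! backward value / shape lemmas -/

lemma val_bwd : ∀ {A B : Tm}, Rel A B → IsValue B → ∃ A', Steps A A' ∧ IsValue A' ∧ Rel A' B := by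
  intro A B r
  induction r with
  | base h1 h2 => intro hB; exact ⟨_, h2, hB, Rel.refl _⟩
  | @appId y σ Q Q' h ih =>
      intro hB
      obtain ⟨V, hs, hV, hr⟩ := ih hB
      refine ⟨V, ?_, hV, hr⟩
      refine (steps_appR (.lam _ _ _) hs).tail ?_
      have := Step.beta (x := y) (α := σ) (M := .var y) hV
      simpa [subst] using this
  | var x => intro hB; cases hB
  | cunit => intro _; exact ⟨_, .refl, .cunit, .cunit⟩
  | cbool b => intro _; exact ⟨_, .refl, .cbool b, .cbool b⟩
  | cint n => intro _; exact ⟨_, .refl, .cint n, .cint n⟩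
  | lam x a h => intro _; exact ⟨_, .refl, .lam _ _ _, .lam x a h⟩
  | fix g x a b h => intro _; exact ⟨_, .refl, .fix _ _ _ _ _, .fix g x a b h⟩
  | app h1 h2 => intro hB; cases hB
  | add h1 h2 => intro hB; cases hB
  | ifte h1 h2 h3 => intro hB; cases hB
  | quote h => intro _; exact ⟨_, .refl, .quote _, .quote h⟩
  | letq x h1 h2 => intro hB; cases hB

lemma rel_bwd_lam' : ∀ {A B : Tm}, Rel A B → ∀ {x : ℕ} {a : Ty} {M' : Tm},
    B = .lam x a M' → ∃ M, Steps A (.lam x a M) ∧ Rel M M' := by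
  intro A B r
  induction r with
  | base h1 h2 => intro x a M' hB; subst hB; exact ⟨M', h2, Rel.refl M'⟩
  | @appId y σ Q Q' h ih =>
      intro x a M' hB
      obtain ⟨M, hs, hr⟩ := ih hB
      refine ⟨M, (steps_appR (.lam _ _ _) hs).tail ?_, hr⟩
      have := Step.beta (x := y) (α := σ) (M := .var y) (V := .lam x a M) (.lam _ _ _)
      simpa [subst] using this
  | var z => intro _ _ _ hB; simp at hB
  | cunit => intro _ _ _ hB; simp at hB
  | cbool b => intro _ _ _ hB; simp at hB
  | cint n => intro _ _ _ hB; simp at hB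
  | lam z c h => intro x a M' hB; cases hB; exact ⟨_, .refl, h⟩
  | fix g z c d h => intro _ _ _ hB; simp at hB
  | app h1 h2 ih1 ih2 => intro _ _ _ hB; simp at hB
  | add h1 h2 ih1 ih2 => intro _ _ _ hB; simp at hB
  | ifte h1 h2 h3 ih1 ih2 ih3 => intro _ _ _ hB; simp at hB
  | quote h ih => intro _ _ _ hB; simp at hB
  | letq z h1 h2 ih1 ih2 => intro _ _ _ hB; simp at hB

lemma rel_bwd_fix' : ∀ {A B : Tm}, Rel A B → ∀ {g x : ℕ} {a b : Ty} {M' : Tm},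
    B = .fix g x a b M' → ∃ M, Steps A (.fix g x a b M) ∧ Rel M M' := by
  intro A B r
  induction r with
  | base h1 h2 => intro g x a b M' hB; subst hB; exact ⟨M', h2, Rel.refl M'⟩
  | @appId y σ Q Q' h ih =>
      intro g x a b M' hB
      obtain ⟨M, hs, hr⟩ := ih hB
      refine ⟨M, (steps_appR (.lam _ _ _) hs).tail ?_, hr⟩
      have := Step.beta (x := y) (α := σ) (M := .var y) (V := .fix g x a b M)
        (.fix _ _ _ _ _)
      simpa [subst] using this
  | var z => intro _ _ _ _ _ hB; simp at hB
  | cunit => intro _ _ _ _ _ hB; simp at hB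
  | cbool b => intro _ _ _ _ _ hB; simp at hB
  | cint n => intro _ _ _ _ _ hB; simp at hB
  | lam z c h => intro _ _ _ _ _ hB; simp at hB
  | fix g z c d h => intro _ _ _ _ _ hB; cases hB; exact ⟨_, .refl, h⟩
  | app h1 h2 ih1 ih2 => intro _ _ _ _ _ hB; simp at hB
  | add h1 h2 ih1 ih2 => intro _ _ _ _ _ hB; simp at hB
  | ifte h1 h2 h3 ih1 ih2 ih3 => intro _ _ _ _ _ hB; simp at hB
  | quote h ih => intro _ _ _ _ _ hB; simp at hB
  | letq z h1 h2 ih1 ih2 => intro _ _ _ _ _ hB; simp at hB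

lemma rel_bwd_quote' : ∀ {A B : Tm}, Rel A B → ∀ {M' : Tm},
    B = .quote M' → ∃ M, Steps A (.quote M) ∧ Rel M M' := by
  intro A B r
  induction r with
  | base h1 h2 => intro M' hB; subst hB; exact ⟨M', h2, Rel.refl M'⟩
  | @appId y σ Q Q' h ih =>
      intro M' hB
      obtain ⟨M, hs, hr⟩ := ih hB
      refine ⟨M, (steps_appR (.lam _ _ _) hs).tail ?_, hr⟩
      have := Step.beta (x := y) (α := σ) (M := .var y) (V := .quote M) (.quote _)
      simpa [subst] using this
  | var z => intro _ hB; simp at hB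
  | cunit => intro _ hB; simp at hB
  | cbool b => intro _ hB; simp at hB
  | cint n => intro _ hB; simp at hB
  | lam z c h => intro _ hB; simp at hB
  | fix g z c d h => intro _ hB; simp at hB
  | app h1 h2 ih1 ih2 => intro _ hB; simp at hB
  | add h1 h2 ih1 ih2 => intro _ hB; simp at hB
  | ifte h1 h2 h3 ih1 ih2 ih3 => intro _ hB; simp at hB
  | quote h ih => intro _ hB; cases hB; exact ⟨_, .refl, h⟩
  | letq z h1 h2 ih1 ih2 => intro _ hB; simp at hB

lemma rel_bwd_cbool' : ∀ {A B : Tm}, Rel A B → ∀ {b : Bool},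
    B = .cbool b → Steps A (.cbool b) := by
  intro A B r
  induction r with
  | base h1 h2 => intro b hB; subst hB; exact h2
  | @appId y σ Q Q' h ih =>
      intro b hB
      refine (steps_appR (.lam _ _ _) (ih hB)).tail ?_
      have := Step.beta (x := y) (α := σ) (M := .var y) (V := .cbool b) (.cbool _)
      simpa [subst] using this
  | var z => intro _ hB; simp at hB
  | cunit => intro _ hB; simp at hB
  | cbool b => intro _ hB; cases hB; exact .refl
  | cint n => intro _ hB; simp at hB
  | lam z c h => intro _ hB; simp at hB
  | fix g z c d h => intro _ hB; simp at hB
  | app h1 h2 ih1 ih2 => intro _ hB; simp at hB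
  | add h1 h2 ih1 ih2 => intro _ hB; simp at hB
  | ifte h1 h2 h3 ih1 ih2 ih3 => intro _ hB; simp at hB
  | quote h ih => intro _ hB; simp at hB
  | letq z h1 h2 ih1 ih2 => intro _ hB; simp at hB

lemma rel_bwd_cint' : ∀ {A B : Tm}, Rel A B → ∀ {n : ℤ},
    B = .cint n → Steps A (.cint n) := by
  intro A B r
  induction r with
  | base h1 h2 => intro n hB; subst hB; exact h2
  | @appId y σ Q Q' h ih =>
      intro n hB
      refine (steps_appR (.lam _ _ _) (ih hB)).tail ?_
      have := Step.beta (x := y) (α := σ) (M := .var y) (V := .cint n) (.cint _)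
      simpa [subst] using this
  | var z => intro _ hB; simp at hB
  | cunit => intro _ hB; simp at hB
  | cbool b => intro _ hB; simp at hB
  | cint n => intro _ hB; cases hB; exact .refl
  | lam z c h => intro _ hB; simp at hB
  | fix g z c d h => intro _ hB; simp at hB
  | app h1 h2 ih1 ih2 => intro _ hB; simp at hB
  | add h1 h2 ih1 ih2 => intro _ hB; simp at hB
  | ifte h1 h2 h3 ih1 ih2 ih3 => intro _ hB; simp at hB
  | quote h ih => intro _ hB; simp at hB
  | letq z h1 h2 ih1 ih2 => intro _ hB; simp at hB
/-! ### Forward and backward simulation -/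

lemma fwd : ∀ {A B : Tm}, Rel A B → ∀ {A₁ : Tm}, Step A A₁ →
    ∃ B₁, Steps B B₁ ∧ Rel A₁ B₁ := by
  intro A B r
  induction r with
  | base h1 h2 =>
      intro A₁ s
      rcases Relation.ReflTransGen.cases_head h2 with rfl | ⟨A', s', h2'⟩
      · exact ⟨A₁, Relation.ReflTransGen.single s, Rel.refl A₁⟩
      · obtain rfl : A₁ = A' := step_det s s'
        exact ⟨_, Relation.ReflTransGen.refl, Rel.base (step_fv_empty s h1) h2'⟩
  | @appId y σ Q Q' h ih =>
      intro A₁ s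
      cases s with
      | beta hV => exact ⟨Q', Relation.ReflTransGen.refl, by simpa [subst] using h⟩
      | appL s' => exact absurd s' (fun s' => value_no_step (.lam _ _ _) s')
      | appR hV s' =>
          obtain ⟨Q₁', hs, hr⟩ := ih s'
          exact ⟨Q₁', hs, .appId hr⟩
  | var z => intro A₁ s; cases s
  | cunit => intro A₁ s; cases s
  | cbool b => intro A₁ s; cases s
  | cint n => intro A₁ s; cases s
  | lam z a h => intro A₁ s; cases s
  | fix g z a b h => intro A₁ s; cases s
  | @app M M' N N' h1 h2 ih1 ih2 =>
      intro A₁ s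
      cases s with
      | beta hV =>
          obtain ⟨B₀', rfl, hB⟩ := rel_fwd_lam h1
          exact ⟨_, Relation.ReflTransGen.single (Step.beta (val_fwd h2 hV)),
            substRel h2 hB⟩
      | betaFix hV =>
          obtain ⟨B₀', rfl, hB⟩ := rel_fwd_fix h1
          exact ⟨_, Relation.ReflTransGen.single (Step.betaFix (val_fwd h2 hV)),
            substRel h2 (substRel (Rel.fix _ _ _ _ hB) hB)⟩
      | appL s' =>
          obtain ⟨M₁', hs, hr⟩ := ih1 s'
          exact ⟨_, steps_appL hs, .app hr h2⟩
      | appR hV s' =>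
          obtain ⟨N₁', hs, hr⟩ := ih2 s'
          exact ⟨_, steps_appR (val_fwd h1 hV) hs, .app h1 hr⟩
  | @add M M' N N' h1 h2 ih1 ih2 =>
      intro A₁ s
      cases s with
      | addC =>
          obtain rfl := rel_fwd_cint h1
          obtain rfl := rel_fwd_cint h2
          exact ⟨_, Relation.ReflTransGen.single Step.addC, Rel.cint _⟩
      | addL s' =>
          obtain ⟨M₁', hs, hr⟩ := ih1 s'
          exact ⟨_, steps_addL hs, .add hr h2⟩
      | addR hV s' =>
          obtain ⟨N₁', hs, hr⟩ := ih2 s'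
          exact ⟨_, steps_addR (val_fwd h1 hV) hs, .add h1 hr⟩
  | @ifte M M' N N' P P' h1 h2 h3 ih1 ih2 ih3 =>
      intro A₁ s
      cases s with
      | iteT =>
          obtain rfl := rel_fwd_cbool h1
          exact ⟨_, Relation.ReflTransGen.single Step.iteT, h2⟩
      | iteF =>
          obtain rfl := rel_fwd_cbool h1
          exact ⟨_, Relation.ReflTransGen.single Step.iteF, h3⟩
      | ifteC s' =>
          obtain ⟨M₁', hs, hr⟩ := ih1 s'
          exact ⟨_, steps_ifteC hs, .ifte hr h2 h3⟩
  | quote h => intro A₁ s; cases s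
  | @letq z M M' N N' h1 h2 ih1 ih2 =>
      intro A₁ s
      cases s with
      | letqQ =>
          obtain ⟨Q', rfl, hQ⟩ := rel_fwd_quote h1
          exact ⟨_, Relation.ReflTransGen.single Step.letqQ, substRel hQ h2⟩
      | letqL s' =>
          obtain ⟨M₁', hs, hr⟩ := ih1 s'
          exact ⟨_, steps_letqL hs, .letq z hr h2⟩

lemma bwd : ∀ {A B : Tm}, Rel A B → ∀ {B₁ : Tm}, Step B B₁ →
    ∃ A₁, Steps A A₁ ∧ Rel A₁ B₁ := by
  intro A B r
  induction r with
  | base h1 h2 =>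
      intro B₁ s
      exact ⟨B₁, h2.tail s, Rel.refl B₁⟩
  | @appId y σ Q Q' h ih =>
      intro B₁ s
      obtain ⟨Q₁, hs, hr⟩ := ih s
      exact ⟨_, steps_appR (.lam _ _ _) hs, .appId hr⟩
  | var z => intro B₁ s; cases s
  | cunit => intro B₁ s; cases s
  | cbool b => intro B₁ s; cases s
  | cint n => intro B₁ s; cases s
  | lam z a h => intro B₁ s; cases s
  | fix g z a b h => intro B₁ s; cases s
  | @app M M' N N' h1 h2 ih1 ih2 =>
      intro B₁ s
      cases s with
      | beta hV =>
          obtain ⟨B₀, hsM, hB⟩ := rel_bwd_lam' h1 rfl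
          obtain ⟨V, hsN, hVval, hrV⟩ := val_bwd h2 hV
          refine ⟨_, ?_, substRel hrV hB⟩
          exact (((steps_appL hsM).trans (steps_appR (.lam _ _ _) hsN)).tail
            (Step.beta hVval))
      | betaFix hV =>
          obtain ⟨B₀, hsM, hB⟩ := rel_bwd_fix' h1 rfl
          obtain ⟨V, hsN, hVval, hrV⟩ := val_bwd h2 hV
          refine ⟨_, ?_, substRel hrV (substRel (Rel.fix _ _ _ _ hB) hB)⟩
          exact (((steps_appL hsM).trans (steps_appR (.fix _ _ _ _ _) hsN)).tail
            (Step.betaFix hVval))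
      | appL s' =>
          obtain ⟨M₁, hs, hr⟩ := ih1 s'
          exact ⟨_, steps_appL hs, .app hr h2⟩
      | appR hV s' =>
          obtain ⟨V, hsM, hVval, hrV⟩ := val_bwd h1 hV
          obtain ⟨N₁, hsN, hr⟩ := ih2 s'
          exact ⟨_, (steps_appL hsM).trans (steps_appR hVval hsN), .app hrV hr⟩
  | @add M M' N N' h1 h2 ih1 ih2 =>
      intro B₁ s
      cases s with
      | addC =>
          have hsM := rel_bwd_cint' h1 rfl
          have hsN := rel_bwd_cint' h2 rfl
          exact ⟨_, ((steps_addL hsM).trans (steps_addR (.cint _) hsN)).tail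
            Step.addC, Rel.cint _⟩
      | addL s' =>
          obtain ⟨M₁, hs, hr⟩ := ih1 s'
          exact ⟨_, steps_addL hs, .add hr h2⟩
      | addR hV s' =>
          obtain ⟨V, hsM, hVval, hrV⟩ := val_bwd h1 hV
          obtain ⟨N₁, hsN, hr⟩ := ih2 s'
          exact ⟨_, (steps_addL hsM).trans (steps_addR hVval hsN), .add hrV hr⟩
  | @ifte M M' N N' P P' h1 h2 h3 ih1 ih2 ih3 =>
      intro B₁ s
      cases s with
      | iteT =>
          have hsM := rel_bwd_cbool' h1 rfl
          exact ⟨_, (steps_ifteC hsM).tail Step.iteT, h2⟩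
      | iteF =>
          have hsM := rel_bwd_cbool' h1 rfl
          exact ⟨_, (steps_ifteC hsM).tail Step.iteF, h3⟩
      | ifteC s' =>
          obtain ⟨M₁, hs, hr⟩ := ih1 s'
          exact ⟨_, steps_ifteC hs, .ifte hr h2 h3⟩
  | quote h => intro B₁ s; cases s
  | @letq z M M' N N' h1 h2 ih1 ih2 =>
      intro B₁ s
      cases s with
      | letqQ =>
          obtain ⟨Q, hsM, hQ⟩ := rel_bwd_quote' h1 rfl
          exact ⟨_, (steps_letqL hsM).tail Step.letqQ, substRel hQ h2⟩
      | letqL s' =>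
          obtain ⟨M₁, hs, hr⟩ := ih1 s'
          exact ⟨_, steps_letqL hs, .letq z hr h2⟩

/-! ### Convergence transfer -/

lemma conv_fwd : ∀ {A V : Tm}, Steps A V → IsValue V →
    ∀ {B : Tm}, Rel A B → Conv B := by
  intro A V h
  induction h using Relation.ReflTransGen.head_induction_on with
  | refl => intro hV B r; exact ⟨B, .refl, val_fwd r hV⟩
  | head s _ ih =>
      intro hV B r
      obtain ⟨B₁, hB, r₁⟩ := fwd r s
      obtain ⟨V', hV', hval⟩ := ih hV r₁
      exact ⟨V', hB.trans hV', hval⟩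

lemma conv_bwd : ∀ {B V : Tm}, Steps B V → IsValue V →
    ∀ {A : Tm}, Rel A B → Conv A := by
  intro B V h
  induction h using Relation.ReflTransGen.head_induction_on with
  | refl =>
      intro hV A r
      obtain ⟨A', hs, hval, _⟩ := val_bwd r hV
      exact ⟨A', hs, hval⟩
  | head s _ ih =>
      intro hV A r
      obtain ⟨A₁, hA, r₁⟩ := bwd r s
      obtain ⟨V', hs', hval⟩ := ih hV r₁
      exact ⟨V', hA.trans hs', hval⟩

lemma conv_iff {A B : Tm} (r : Rel A B) : Conv A ↔ Conv B :=
  ⟨fun ⟨_, hs, hv⟩ => conv_fwd hs hv r, fun ⟨_, hs, hv⟩ => conv_bwd hs hv r⟩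

/-! Rel is closed under contexts -/

lemma rel_plug {P Q : Tm} (r : Rel P Q) : ∀ C : Ctx, Rel (C.plug P) (C.plug Q) := by
  intro C
  induction C with
  | hole => exact r
  | lamC x a C ih => exact .lam x a ih
  | fixC g x a b C ih => exact .fix g x a b ih
  | appL C N ih => exact .app ih (Rel.refl N)
  | appR L C ih => exact .app (Rel.refl L) ih
  | addL C N ih => exact .add ih (Rel.refl N)
  | addR L C ih => exact .add (Rel.refl L) ih
  | ifteC C N N' ih => exact .ifte ih (Rel.refl N) (Rel.refl N')
  | ifteL L C N' ih => exact .ifte (Rel.refl L) ih (Rel.refl N')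
  | ifteR L N C ih => exact .ifte (Rel.refl L) (Rel.refl N) ih
  | quoteC C ih => exact .quote ih
  | letqL x C N ih => exact .letq x ih (Rel.refl N)
  | letqR x L C ih => exact .letq x (Rel.refl L) ih

/-- Context composition. -/
def Ctx.comp : Ctx → Ctx → Ctx
  | .hole, D => D
  | .lamC x a C, D => .lamC x a (C.comp D)
  | .fixC g x a b C, D => .fixC g x a b (C.comp D)
  | .appL C N, D => .appL (C.comp D) N
  | .appR L C, D => .appR L (C.comp D)
  | .addL C N, D => .addL (C.comp D) N
  | .addR L C, D => .addR L (C.comp D)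
  | .ifteC C N N', D => .ifteC (C.comp D) N N'
  | .ifteL L C N', D => .ifteL L (C.comp D) N'
  | .ifteR L N C, D => .ifteR L N (C.comp D)
  | .quoteC C, D => .quoteC (C.comp D)
  | .letqL x C N, D => .letqL x (C.comp D) N
  | .letqR x L C, D => .letqR x L (C.comp D)

lemma comp_plug : ∀ (C D : Ctx) (P : Tm), (C.comp D).plug P = C.plug (D.plug P) := by
  intro C D P
  induction C <;> simp [Ctx.comp, Ctx.plug, *]
/-! ### Typing lemmas -/

lemma types_mono : ∀ {Γ Δ : Env} {A : Tm} {τ : Ty}, Types Γ Δ A τ →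
    ∀ {Γ' Δ' : Env}, (∀ x σ, Γ x = some σ → Γ' x = some σ) →
    (∀ x σ, Δ x = some σ → Δ' x = some σ) → Types Γ' Δ' A τ := by
  intro Γ Δ A τ h
  induction h with
  | varN hx => intro Γ' Δ' hg hd; exact .varN (hg _ _ hx)
  | varM hx => intro Γ' Δ' hg hd; exact .varM (hd _ _ hx)
  | cunit => intro _ _ _ _; exact .cunit
  | cbool => intro _ _ _ _; exact .cbool
  | cint => intro _ _ _ _; exact .cint
  | @lam Γ Δ x α β M hM ih =>
      intro Γ' Δ' hg hd
      refine .lam (ih ?_ hd)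
      intro y σ hy
      by_cases hxy : y = x
      · subst hxy; simpa [Env.update] using hy
      · simp only [Env.update, if_neg hxy] at hy ⊢; exact hg _ _ hy
  | @fix Γ Δ g x α β M hM ih =>
      intro Γ' Δ' hg hd
      refine .fix (ih ?_ hd)
      intro y σ hy
      by_cases hyx : y = x
      · subst hyx; simpa [Env.update] using hy
      · by_cases hyg : y = g
        · subst hyg; simp only [Env.update, if_neg hyx] at hy ⊢
          simpa [Env.update] using hy
        · simp only [Env.update, if_neg hyx, if_neg hyg] at hy ⊢
          exact hg _ _ hy
  | app hM hN ihM ihN => intro _ _ hg hd; exact .app (ihM hg hd) (ihN hg hd)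
  | add hM hN ihM ihN => intro _ _ hg hd; exact .add (ihM hg hd) (ihN hg hd)
  | ifte hM hN hN' ihM ihN ihN' =>
      intro _ _ hg hd; exact .ifte (ihM hg hd) (ihN hg hd) (ihN' hg hd)
  | quote hM ih =>
      intro _ _ hg hd
      exact .quote (ih (fun x σ hx => by simp [Env.empty] at hx) hd)
  | @letq Γ Δ x M N α β hM hN ihM ihN =>
      intro Γ' Δ' hg hd
      refine .letq (ihM hg hd) (ihN hg ?_)
      intro y σ hy
      by_cases hxy : y = x
      · subst hxy; simpa [Env.update] using hy
      · simp only [Env.update, if_neg hxy] at hy ⊢; exact hd _ _ hy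

lemma closed_types_any {A : Tm} {τ : Ty} (h : Closed A τ) {Γ Δ : Env} :
    Types Γ Δ A τ :=
  types_mono h (fun x σ hx => by simp [Env.empty] at hx)
    (fun x σ hx => by simp [Env.empty] at hx)

lemma types_fv : ∀ {Γ Δ : Env} {A : Tm} {τ : Ty}, Types Γ Δ A τ →
    ∀ y ∈ FV A, (Γ y).isSome ∨ (Δ y).isSome := by
  intro Γ Δ A τ h
  induction h with
  | @varN Γ Δ x α hx => intro y hy; simp [FV] at hy; subst hy; left; simp [hx]
  | @varM Γ Δ x α hx => intro y hy; simp [FV] at hy; subst hy; right; simp [hx]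
  | cunit => intro y hy; simp [FV] at hy
  | cbool => intro y hy; simp [FV] at hy
  | cint => intro y hy; simp [FV] at hy
  | @lam Γ Δ x α β M hM ih =>
      intro y hy
      simp only [FV, Finset.mem_sdiff, Finset.mem_singleton] at hy
      rcases ih y hy.1 with hh | hh
      · left; simpa [Env.update, hy.2] using hh
      · right; exact hh
  | @fix Γ Δ g x α β M hM ih =>
      intro y hy
      simp only [FV, Finset.mem_sdiff, Finset.mem_insert, Finset.mem_singleton] at hy
      have hyg : ¬ y = g := fun hc => hy.2 (Or.inl hc)
      have hyx : ¬ y = x := fun hc => hy.2 (Or.inr hc)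
      rcases ih y hy.1 with hh | hh
      · left; simpa [Env.update, hyg, hyx] using hh
      · right; exact hh
  | app hM hN ihM ihN =>
      intro y hy
      simp only [FV, Finset.mem_union] at hy
      rcases hy with hy | hy
      · exact ihM y hy
      · exact ihN y hy
  | add hM hN ihM ihN =>
      intro y hy
      simp only [FV, Finset.mem_union] at hy
      rcases hy with hy | hy
      · exact ihM y hy
      · exact ihN y hy
  | ifte hM hN hN' ihM ihN ihN' =>
      intro y hy
      simp only [FV, Finset.mem_union] at hy
      rcases hy with (hy | hy) | hy
      · exact ihM y hy
      · exact ihN y hy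
      · exact ihN' y hy
  | quote hM ih =>
      intro y hy
      simp only [FV] at hy
      rcases ih y hy with hh | hh
      · simp [Env.empty] at hh
      · right; exact hh
  | @letq Γ Δ x M N α β hM hN ihM ihN =>
      intro y hy
      simp only [FV, Finset.mem_union, Finset.mem_sdiff, Finset.mem_singleton] at hy
      rcases hy with hy | hy
      · exact ihM y hy
      · rcases ihN y hy.1 with hh | hh
        · left; exact hh
        · right; simpa [Env.update, hy.2] using hh

lemma closed_fv {A : Tm} {τ : Ty} (h : Closed A τ) : FV A = ∅ := by
  ext y
  simp only [Finset.notMem_empty, iff_false]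
  intro hy
  rcases types_fv h y hy with hh | hh <;> simp [Env.empty] at hh

/-- Spine extraction: a typed plugged context yields the typing of the hole
term together with a re-plugging принцип. -/
lemma plug_spine {P : Tm} : ∀ (C : Ctx) {Γ Δ : Env} {τ : Ty},
    Types Γ Δ (C.plug P) τ →
    ∃ Γ₀ Δ₀ τ₀, Types Γ₀ Δ₀ P τ₀ ∧
      ∀ Q, Types Γ₀ Δ₀ Q τ₀ → Types Γ Δ (C.plug Q) τ := by
  intro C
  induction C with
  | hole => intro Γ Δ τ h; exact ⟨Γ, Δ, τ, h, fun Q hQ => hQ⟩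
  | lamC x a C ih =>
      intro Γ Δ τ h
      cases h with
      | lam h' =>
          obtain ⟨Γ₀, Δ₀, τ₀, h0, reb⟩ := ih h'
          exact ⟨Γ₀, Δ₀, τ₀, h0, fun Q hQ => .lam (reb Q hQ)⟩
  | fixC g x a b C ih =>
      intro Γ Δ τ h
      cases h with
      | fix h' =>
          obtain ⟨Γ₀, Δ₀, τ₀, h0, reb⟩ := ih h'
          exact ⟨Γ₀, Δ₀, τ₀, h0, fun Q hQ => .fix (reb Q hQ)⟩
  | appL C N ih =>
      intro Γ Δ τ h
      cases h with
      | app h1 h2 =>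
          obtain ⟨Γ₀, Δ₀, τ₀, h0, reb⟩ := ih h1
          exact ⟨Γ₀, Δ₀, τ₀, h0, fun Q hQ => .app (reb Q hQ) h2⟩
  | appR L C ih =>
      intro Γ Δ τ h
      cases h with
      | app h1 h2 =>
          obtain ⟨Γ₀, Δ₀, τ₀, h0, reb⟩ := ih h2
          exact ⟨Γ₀, Δ₀, τ₀, h0, fun Q hQ => .app h1 (reb Q hQ)⟩
  | addL C N ih =>
      intro Γ Δ τ h
      cases h with
      | add h1 h2 =>
          obtain ⟨Γ₀, Δ₀, τ₀, h0, reb⟩ := ih h1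
          exact ⟨Γ₀, Δ₀, τ₀, h0, fun Q hQ => .add (reb Q hQ) h2⟩
  | addR L C ih =>
      intro Γ Δ τ h
      cases h with
      | add h1 h2 =>
          obtain ⟨Γ₀, Δ₀, τ₀, h0, reb⟩ := ih h2
          exact ⟨Γ₀, Δ₀, τ₀, h0, fun Q hQ => .add h1 (reb Q hQ)⟩
  | ifteC C N N' ih =>
      intro Γ Δ τ h
      cases h with
      | ifte h1 h2 h3 =>
          obtain ⟨Γ₀, Δ₀, τ₀, h0, reb⟩ := ih h1
          exact ⟨Γ₀, Δ₀, τ₀, h0, fun Q hQ => .ifte (reb Q hQ) h2 h3⟩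
  | ifteL L C N' ih =>
      intro Γ Δ τ h
      cases h with
      | ifte h1 h2 h3 =>
          obtain ⟨Γ₀, Δ₀, τ₀, h0, reb⟩ := ih h2
          exact ⟨Γ₀, Δ₀, τ₀, h0, fun Q hQ => .ifte h1 (reb Q hQ) h3⟩
  | ifteR L N C ih =>
      intro Γ Δ τ h
      cases h with
      | ifte h1 h2 h3 =>
          obtain ⟨Γ₀, Δ₀, τ₀, h0, reb⟩ := ih h3
          exact ⟨Γ₀, Δ₀, τ₀, h0, fun Q hQ => .ifte h1 h2 (reb Q hQ)⟩
  | quoteC C ih =>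
      intro Γ Δ τ h
      cases h with
      | quote h' =>
          obtain ⟨Γ₀, Δ₀, τ₀, h0, reb⟩ := ih h'
          exact ⟨Γ₀, Δ₀, τ₀, h0, fun Q hQ => .quote (reb Q hQ)⟩
  | letqL x C N ih =>
      intro Γ Δ τ h
      cases h with
      | letq h1 h2 =>
          obtain ⟨Γ₀, Δ₀, τ₀, h0, reb⟩ := ih h1
          exact ⟨Γ₀, Δ₀, τ₀, h0, fun Q hQ => .letq (reb Q hQ) h2⟩
  | letqR x L C ih =>
      intro Γ Δ τ h
      cases h with
      | letq h1 h2 =>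
          obtain ⟨Γ₀, Δ₀, τ₀, h0, reb⟩ := ih h2
          exact ⟨Γ₀, Δ₀, τ₀, h0, fun Q hQ => .letq h1 (reb Q hQ)⟩

/-! ### A closed diverging term of an arbitrary type -/

/-- `diverge τ` is a closed term of type `τ` (it diverges, but we only need
its typing). -/
def diverge (τ : Ty) : Tm :=
  .app (.fix 0 1 .unit τ (.app (.var 0) (.var 1))) .cunit

lemma diverge_types {Γ Δ : Env} {τ : Ty} : Types Γ Δ (diverge τ) τ := by
  refine Types.app (α := Ty.unit) (Types.fix ?_) Types.cunit
  refine Types.app (α := Ty.unit) (Types.varN ?_) (Types.varN ?_)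
  · simp [Env.update]
  · simp [Env.update]

lemma fv_diverge {τ : Ty} : FV (diverge τ) = ∅ := by
  simp only [diverge, FV]
  decide
/-! ### Extracting a quote from a converging let-quote -/

lemma letq_extract_aux : ∀ {T V : Tm}, Steps T V → IsValue V →
    ∀ {x : ℕ} {A B : Tm}, T = .letq x A B → ∃ M', Steps A (.quote M') := by
  intro T V h
  induction h using Relation.ReflTransGen.head_induction_on with
  | refl => intro hV x A B hT; subst hT; cases hV
  | @head T c s hs ih =>
      intro hV x A B hT
      subst hT
      cases s with
      | @letqQ _ M₀ _ => exact ⟨M₀, .refl⟩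
      | letqL s' =>
          obtain ⟨M', hM'⟩ := ih hV rfl
          exact ⟨M', .head s' hM'⟩
/-- if `N` is closed and `⟨M⟩ ≃ N`, then `N ⇓ ⟨M'⟩` with `M ≃ M'`. -/
theorem cong_quote_evals_quote (M N : Tm) (α : Ty)
    (hq : Closed (Tm.quote M) (Ty.code α)) (hN : Closed N (Ty.code α))
    (h : Cong (Tm.quote M) N) :
    ∃ M', Evals N (Tm.quote M') ∧ Cong M M' := by
  have hFVM : FV M = ∅ := by
    have := closed_fv hq
    simpa [FV] using this
  have hFVN : FV N = ∅ := closed_fv hN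
  -- Step 1: `N` used in a let-quote converges.
  have hT1 : Closed ((Ctx.letqL 0 .hole .cunit).plug (Tm.quote M)) .unit :=
    Types.letq hq Types.cunit
  have hT2 : Closed ((Ctx.letqL 0 .hole .cunit).plug N) .unit :=
    Types.letq hN Types.cunit
  have hc0 : Conv ((Ctx.letqL 0 .hole .cunit).plug (Tm.quote M)) := by
    refine ⟨Tm.cunit, ?_, IsValue.cunit⟩
    have hstep : Step (Tm.letq 0 (Tm.quote M) Tm.cunit) (subst 0 M Tm.cunit) :=
      Step.letqQ
    simpa [subst, Ctx.plug, Steps] using Relation.ReflTransGen.single hstep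
  have hcN : Conv (Tm.letq 0 N Tm.cunit) := h.1 _ hT1 hT2 hc0
  obtain ⟨V, hVsteps, hVval⟩ := hcN
  obtain ⟨M', hNM'⟩ := letq_extract_aux hVsteps hVval rfl
  have hFVM' : FV M' = ∅ := by
    have := steps_fv_empty hNM' hFVN
    simpa [FV] using this
  refine ⟨M', ⟨hNM', IsValue.quote M'⟩, ?_⟩
  -- Step 2: the key transfer lemma.
  have key : ∀ C : Ctx, Closed (C.plug M) .unit →
      (Conv (C.plug M) ↔ Conv (C.plug M')) := by
    intro C hCM
    obtain ⟨Γ₀, Δ₀, τ₀, hM₀, reb⟩ := plug_spine C hCM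
    set B₀ : Tm := Tm.letq 1 (Tm.quote (diverge τ₀))
      (Tm.app (Tm.lam 1 α (Tm.var 1)) (Tm.var 0)) with hB₀
    set D : Ctx := Ctx.letqL 0 Ctx.hole B₀ with hD
    have hXty : ∀ P : Tm, Types Γ₀ Δ₀ P (Ty.code α) →
        Types Γ₀ Δ₀ (Tm.letq 0 P B₀) τ₀ := by
      intro P hP
      refine Types.letq hP ?_
      refine Types.letq (Types.quote diverge_types) ?_
      refine Types.app (Types.lam (Types.varM ?_)) (Types.varM ?_)
      · simp [Env.update]
      · simp [Env.update]
    have T1 : Closed ((C.comp D).plug (Tm.quote M)) .unit := by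
      rw [comp_plug]
      exact reb _ (hXty _ (closed_types_any hq))
    have T2 : Closed ((C.comp D).plug N) .unit := by
      rw [comp_plug]
      exact reb _ (hXty _ (closed_types_any hN))
    have ridM : Rel (Tm.app (Tm.lam 1 α (Tm.var 1)) M) M := Rel.appId (Rel.refl M)
    have ridM' : Rel (Tm.app (Tm.lam 1 α (Tm.var 1)) M') M' := Rel.appId (Rel.refl M')
    have sX : ∀ P : Tm, FV P = ∅ →
        Steps (Tm.letq 0 (Tm.quote P) B₀) (Tm.app (Tm.lam 1 α (Tm.var 1)) P) := by
      intro P hP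
      have s1 : Step (Tm.letq 0 (Tm.quote P) B₀) (subst 0 P B₀) := Step.letqQ
      have e1 : subst 0 P B₀ = Tm.letq 1 (Tm.quote (diverge τ₀))
          (Tm.app (Tm.lam 1 α (Tm.var 1)) P) := by
        simp [hB₀, subst, diverge]
      have s2 : Step (Tm.letq 1 (Tm.quote (diverge τ₀))
          (Tm.app (Tm.lam 1 α (Tm.var 1)) P))
          (subst 1 (diverge τ₀) (Tm.app (Tm.lam 1 α (Tm.var 1)) P)) := Step.letqQ
      have e2 : subst 1 (diverge τ₀) (Tm.app (Tm.lam 1 α (Tm.var 1)) P)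
          = Tm.app (Tm.lam 1 α (Tm.var 1)) P := by
        simp [subst, subst_id (show (1:ℕ) ∉ FV P by simp [hP])]
      refine Relation.ReflTransGen.head s1 ?_
      rw [e1]
      exact Relation.ReflTransGen.single (by simpa only [e2] using s2)
    have rXM : Rel (D.plug (Tm.quote M)) (Tm.app (Tm.lam 1 α (Tm.var 1)) M) := by
      refine Rel.base ?_ (sX M hFVM)
      show FV (Tm.letq 0 (Tm.quote M) B₀) = ∅
      simp [FV, hB₀, hFVM, diverge]
    have rXN : Rel (D.plug N) (Tm.app (Tm.lam 1 α (Tm.var 1)) M') := by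
      refine Rel.base ?_ ((steps_letqL hNM').trans (sX M' hFVM'))
      show FV (Tm.letq 0 N B₀) = ∅
      simp [FV, hB₀, hFVN, diverge]
    constructor
    · intro hc
      have hc1 : Conv (C.plug (Tm.app (Tm.lam 1 α (Tm.var 1)) M)) :=
        (conv_iff (rel_plug ridM C)).mpr hc
      have hc2 : Conv (C.plug (D.plug (Tm.quote M))) :=
        (conv_iff (rel_plug rXM C)).mpr hc1
      have hc3 : Conv ((C.comp D).plug (Tm.quote M)) := by
        rw [comp_plug]; exact hc2
      have hc4 : Conv ((C.comp D).plug N) := h.1 _ T1 T2 hc3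
      have hc5 : Conv (C.plug (D.plug N)) := by
        rw [← comp_plug]; exact hc4
      have hc6 : Conv (C.plug (Tm.app (Tm.lam 1 α (Tm.var 1)) M')) :=
        (conv_iff (rel_plug rXN C)).mp hc5
      exact (conv_iff (rel_plug ridM' C)).mp hc6
    · intro hc
      have hc1 : Conv (C.plug (Tm.app (Tm.lam 1 α (Tm.var 1)) M')) :=
        (conv_iff (rel_plug ridM' C)).mpr hc
      have hc2 : Conv (C.plug (D.plug N)) :=
        (conv_iff (rel_plug rXN C)).mpr hc1
      have hc3 : Conv ((C.comp D).plug N) := by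
        rw [comp_plug]; exact hc2
      have hc4 : Conv ((C.comp D).plug (Tm.quote M)) := h.2 _ T2 T1 hc3
      have hc5 : Conv (C.plug (D.plug (Tm.quote M))) := by
        rw [← comp_plug]; exact hc4
      have hc6 : Conv (C.plug (Tm.app (Tm.lam 1 α (Tm.var 1)) M)) :=
        (conv_iff (rel_plug rXM C)).mp hc5
      exact (conv_iff (rel_plug ridM C)).mp hc6
  exact ⟨fun C h1 _ hc => (key C h1).mp hc, fun C _ h2 hc => (key C h2).mpr hc⟩
end PCFdp
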